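/- Let n ≥ 1, let P be an n×n orthogonal projection, let H be a finite index set with nonnegative weights (q_η)_{η∈H} summing to 1 and orthogonal projections (Π_η)_{η∈H} with Π_η P = P Π_η = P, and set M_H := ∑_η q_η Π_η and Δ_H := 1 − ‖M_H − P‖. For i = 1, …, L let M_{i,η} (η ∈ H) be n×n matrices with M_{i,η} P = P M_{i,η} = P and M_{i,η} M_{i,η}† ≤ (1−δ_i)²·I + (1−(1−δ_i)²)·Π_η for constants δ_i ∈ [0,1], and set M_i := ∑_η q_η M_{i,η}. Let N, t ≥ 1 be integers, d ≥ 2 an integer, ε ∈ (0,1], Δ_loc ∈ (0,1] with ∑_{i=1}^{L} δ_i ≥ L·Δ_loc, and suppose Δ_H > 0 and L ≥ 2·Δ_loc⁻¹·Δ_H⁻¹·(2·N·t·log d − log ε). Then ‖M_L ⋯ M_2 M_1 − P‖ ≤ ε·d^{−2Nt}. -/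

import Mathlib

open Matrix
open scoped ComplexOrder

/-- The operator norm of a square complex matrix (largest singular value). -/
noncomputable def opNorm {n : Type*} [Fintype n] [DecidableEq n] (A : Matrix n n ℂ) : ℝ :=
  ‖Matrix.toEuclideanCLM (𝕜 := ℂ) A‖

set_option maxHeartbeats 1000000
set_option synthInstance.maxHeartbeats 400000

namespace DesignAux

variable {n : ℕ}

noncomputable abbrev φ (A : Matrix (Fin n) (Fin n) ℂ) :
    EuclideanSpace ℂ (Fin n) →L[ℂ] EuclideanSpace ℂ (Fin n) :=
  Matrix.toEuclideanCLM (𝕜 := ℂ) A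

noncomputable def quad (A : Matrix (Fin n) (Fin n) ℂ) (u : EuclideanSpace ℂ (Fin n)) : ℝ :=
  (inner (𝕜 := ℂ) u (φ A u)).re

lemma quad_sub (A B : Matrix (Fin n) (Fin n) ℂ) (u : EuclideanSpace ℂ (Fin n)) :
    quad (A - B) u = quad A u - quad B u := by
  unfold quad φ
  rw [_root_.map_sub, ContinuousLinearMap.sub_apply, inner_sub_right, Complex.sub_re]


lemma quad_add (A B : Matrix (Fin n) (Fin n) ℂ) (u : EuclideanSpace ℂ (Fin n)) :
    quad (A + B) u = quad A u + quad B u := by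
  unfold quad φ
  rw [_root_.map_add, ContinuousLinearMap.add_apply, inner_add_right, Complex.add_re]

lemma quad_smul (r : ℝ) (A : Matrix (Fin n) (Fin n) ℂ) (u : EuclideanSpace ℂ (Fin n)) :
    quad ((r : ℂ) • A) u = r * quad A u := by
  unfold quad φ
  rw [_root_.map_smul, ContinuousLinearMap.smul_apply, inner_smul_right]
  simp [Complex.mul_re]

lemma quad_one (u : EuclideanSpace ℂ (Fin n)) :
    quad (1 : Matrix (Fin n) (Fin n) ℂ) u = ‖u‖ ^ 2 := by
  unfold quad φ
  rw [_root_.map_one, ContinuousLinearMap.one_apply]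
  have := inner_self_eq_norm_sq (𝕜 := ℂ) u
  simpa using this

lemma quad_sum {H : Type} [Fintype H] (f : H → Matrix (Fin n) (Fin n) ℂ)
    (u : EuclideanSpace ℂ (Fin n)) : quad (∑ η, f η) u = ∑ η, quad (f η) u := by
  unfold quad φ
  rw [_root_.map_sum, ContinuousLinearMap.sum_apply, inner_sum]
  exact Complex.re_sum _ _

lemma norm_sq_eq_quad (B : Matrix (Fin n) (Fin n) ℂ) (u : EuclideanSpace ℂ (Fin n)) :
    ‖φ B u‖ ^ 2 = quad (Bᴴ * B) u := by
  unfold quad φ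
  rw [_root_.map_mul]
  have h : Matrix.toEuclideanCLM (𝕜 := ℂ) Bᴴ
      = ContinuousLinearMap.adjoint (Matrix.toEuclideanCLM (𝕜 := ℂ) B) := by
    rw [← ContinuousLinearMap.star_eq_adjoint, ← Matrix.star_eq_conjTranspose, map_star]
  rw [ContinuousLinearMap.mul_apply, h, ContinuousLinearMap.adjoint_inner_right]
  have := inner_self_eq_norm_sq (𝕜 := ℂ) (Matrix.toEuclideanCLM (𝕜 := ℂ) B u)
  simpa using this.symm

lemma quad_conj (R S : Matrix (Fin n) (Fin n) ℂ) (u : EuclideanSpace ℂ (Fin n)) :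
    quad (Rᴴ * S * R) u = quad S (φ R u) := by
  unfold quad φ
  rw [_root_.map_mul, _root_.map_mul]
  have h : Matrix.toEuclideanCLM (𝕜 := ℂ) Rᴴ
      = ContinuousLinearMap.adjoint (Matrix.toEuclideanCLM (𝕜 := ℂ) R) := by
    rw [← ContinuousLinearMap.star_eq_adjoint, ← Matrix.star_eq_conjTranspose, map_star]
  rw [ContinuousLinearMap.mul_apply, ContinuousLinearMap.mul_apply, h,
    ContinuousLinearMap.adjoint_inner_right]

lemma quad_nonneg {S : Matrix (Fin n) (Fin n) ℂ} (hS : S.PosSemidef)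
    (u : EuclideanSpace ℂ (Fin n)) : 0 ≤ quad S u :=
  by
  have := hS.re_dotProduct_nonneg (WithLp.equiv _ _ u)
  unfold quad φ
  rw [EuclideanSpace.inner_eq_star_dotProduct] at *
  rw [ofLp_toEuclideanCLM, dotProduct_comm]
  exact this

lemma quad_le_opNorm (S : Matrix (Fin n) (Fin n) ℂ) (u : EuclideanSpace ℂ (Fin n)) :
    quad S u ≤ opNorm S * ‖u‖ ^ 2 := by
  calc (inner (𝕜 := ℂ) u (φ S u)).re ≤ ‖(inner (𝕜 := ℂ) u (φ S u))‖ :=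
        Complex.re_le_norm _
    _ = ‖(inner (𝕜 := ℂ) u (φ S u))‖ := rfl
    _ ≤ ‖u‖ * ‖φ S u‖ := norm_inner_le_norm _ _
    _ ≤ ‖u‖ * (‖φ S‖ * ‖u‖) := by gcongr; exact ContinuousLinearMap.le_opNorm _ _
    _ = opNorm S * ‖u‖ ^ 2 := by rw [opNorm]; ring

lemma opNorm_conjTranspose (A : Matrix (Fin n) (Fin n) ℂ) : opNorm Aᴴ = opNorm A := by
  rw [opNorm, opNorm, ← Matrix.star_eq_conjTranspose, map_star,
    ContinuousLinearMap.star_eq_adjoint]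
  exact LinearIsometryEquiv.norm_map ContinuousLinearMap.adjoint _

/-- Key single-layer bound. -/
lemma layer_bound {H : Type} [Fintype H]
    (P : Matrix (Fin n) (Fin n) ℂ) (hP_herm : Pᴴ = P) (hP_idem : P * P = P)
    (q : H → ℝ) (hq : ∀ η, 0 ≤ q η) (hqsum : ∑ η, q η = 1)
    (Prj : H → Matrix (Fin n) (Fin n) ℂ)
    (hPrjP : ∀ η, Prj η * P = P) (hPPrj : ∀ η, P * Prj η = P)
    (K : H → Matrix (Fin n) (Fin n) ℂ)
    (hKP : ∀ η, K η * P = P)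
    (c s : ℝ) (hc0 : 0 ≤ c) (hs0 : 0 ≤ s) (hcs : c + s = 1)
    (hgram : ∀ η, (((c : ℝ) : ℂ) • (1 : Matrix (Fin n) (Fin n) ℂ)
        + ((s : ℝ) : ℂ) • Prj η - K η * (K η)ᴴ).PosSemidef)
    (hΔH : 0 < 1 - opNorm ((∑ η, (q η : ℂ) • Prj η) - P)) :
    opNorm ((∑ η, (q η : ℂ) • K η) - P)
      ≤ Real.sqrt (1 - s * (1 - opNorm ((∑ η, (q η : ℂ) • Prj η) - P))) := by
  classical
  set MH : Matrix (Fin n) (Fin n) ℂ := (∑ η, (q η : ℂ) • Prj η) with hMH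
  set Δ : ℝ := 1 - opNorm (MH - P) with hΔ
  have hqc : (∑ η, (q η : ℂ)) = 1 := by
    rw [← Complex.ofReal_sum, hqsum, Complex.ofReal_one]
  have hsumP : (∑ η : H, (q η : ℂ) • P) = P := by
    rw [← Finset.sum_smul, hqc, one_smul]
  have hΔ1 : Δ ≤ 1 := by
    have := norm_nonneg (Matrix.toEuclideanCLM (𝕜 := ℂ) (MH - P))
    rw [hΔ]; unfold opNorm; linarith
  have h1sΔ : 0 ≤ 1 - s * Δ := by nlinarith [hΔH, hΔ1, hc0, hs0, hcs]
  -- conj-transpose decomposition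
  have hAH : ((∑ η, (q η : ℂ) • K η) - P)ᴴ = ∑ η, (q η : ℂ) • ((K η)ᴴ - P) := by
    have h1 : (∑ η, (q η : ℂ) • ((K η)ᴴ - P))
        = (∑ η, (q η : ℂ) • (K η)ᴴ) - (∑ η : H, (q η : ℂ) • P) := by
      rw [← Finset.sum_sub_distrib]
      exact Finset.sum_congr rfl fun η _ => smul_sub _ _ _
    rw [h1, hsumP, conjTranspose_sub, conjTranspose_sum, hP_herm]
    congr 1
    exact Finset.sum_congr rfl fun η _ => by
      rw [conjTranspose_smul, Complex.star_def, Complex.conj_ofReal]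
  have hPKH : ∀ η, P * (K η)ᴴ = P := fun η => by
    conv_lhs => rw [← hP_herm]
    rw [← conjTranspose_mul, hKP, hP_herm]
  -- bound per vector
  have key : ∀ u : EuclideanSpace ℂ (Fin n),
      ‖φ (((∑ η, (q η : ℂ) • K η) - P)ᴴ) u‖ ≤ Real.sqrt (1 - s * Δ) * ‖u‖ := by
    intro u
    set p : ℝ := quad P u with hp
    have hp0 : 0 ≤ p := by
      have : P = Pᴴ * P := by rw [hP_herm, hP_idem]
      rw [hp, this, ← norm_sq_eq_quad]
      positivity
    set w : ℝ := ‖u‖ ^ 2 - p with hw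
    have hw0 : 0 ≤ w := by
      have h1 : ((1 : Matrix (Fin n) (Fin n) ℂ) - P)ᴴ * (1 - P) = 1 - P := by
        rw [conjTranspose_sub, conjTranspose_one, hP_herm, sub_mul, mul_sub, mul_sub,
          hP_idem, one_mul, mul_one]
        simp
      have := norm_sq_eq_quad (1 - P) u
      rw [h1, quad_sub, quad_one] at this
      rw [hw, hp, ← this]; positivity
    set x : H → ℝ := fun η => c * w + s * quad (Prj η - P) u with hx
    have hxge : ∀ η, ‖φ ((K η)ᴴ - P) u‖ ^ 2 ≤ x η := by
      intro η
      have hB : ((K η)ᴴ - P)ᴴ * ((K η)ᴴ - P) = K η * (K η)ᴴ - P := by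
        rw [conjTranspose_sub, conjTranspose_conjTranspose, hP_herm, sub_mul, mul_sub,
          mul_sub, hKP, hPKH, hP_idem]
        simp
      rw [norm_sq_eq_quad, hB]
      have hdec : K η * (K η)ᴴ - P
          = (((c : ℝ) : ℂ) • (1 : Matrix (Fin n) (Fin n) ℂ) + ((s : ℝ) : ℂ) • Prj η - P)
            - (((c : ℝ) : ℂ) • (1 : Matrix (Fin n) (Fin n) ℂ) + ((s : ℝ) : ℂ) • Prj η
              - K η * (K η)ᴴ) := by abel
      rw [hdec, quad_sub]
      have hpos := quad_nonneg (hgram η) u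
      have hsc : s = 1 - c := by linarith
      have hval : quad (((c : ℝ) : ℂ) • (1 : Matrix (Fin n) (Fin n) ℂ)
          + ((s : ℝ) : ℂ) • Prj η - P) u = x η := by
        show _ = c * w + s * quad (Prj η - P) u
        rw [quad_sub, quad_add, quad_smul, quad_smul, quad_one, quad_sub, hw, hp, hsc]
        ring
      rw [hval]; linarith
    have hx0 : ∀ η, 0 ≤ x η := fun η => le_trans (by positivity) (hxge η)
    have hnormle : ∀ η, ‖φ ((K η)ᴴ - P) u‖ ≤ Real.sqrt (x η) := by
      intro η
      rw [← Real.sqrt_sq (norm_nonneg (φ ((K η)ᴴ - P) u))]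
      exact Real.sqrt_le_sqrt (hxge η)
    -- triangle inequality
    have htri : ‖φ (((∑ η, (q η : ℂ) • K η) - P)ᴴ) u‖ ≤ ∑ η, q η * Real.sqrt (x η) := by
      rw [hAH]
      have : φ (∑ η, (q η : ℂ) • ((K η)ᴴ - P)) u
          = ∑ η, (q η : ℂ) • (φ ((K η)ᴴ - P) u) := by
        unfold φ
        rw [_root_.map_sum, ContinuousLinearMap.sum_apply]
        exact Finset.sum_congr rfl fun η _ => by
          rw [_root_.map_smul, ContinuousLinearMap.smul_apply]
      rw [this]
      refine le_trans (norm_sum_le _ _) (Finset.sum_le_sum fun η _ => ?_)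
      rw [norm_smul, Complex.norm_real, Real.norm_eq_abs, abs_of_nonneg (hq η)]
      exact mul_le_mul_of_nonneg_left (hnormle η) (hq η)
    -- Cauchy-Schwarz
    have hCS : (∑ η, q η * Real.sqrt (x η)) ^ 2 ≤ ∑ η, q η * x η := by
      have := Finset.sum_mul_sq_le_sq_mul_sq Finset.univ (fun η => Real.sqrt (q η))
        (fun η => Real.sqrt (q η) * Real.sqrt (x η))
      have e1 : ∀ η : H, Real.sqrt (q η) * (Real.sqrt (q η) * Real.sqrt (x η))
          = q η * Real.sqrt (x η) := fun η => by
        rw [← mul_assoc, Real.mul_self_sqrt (hq η)]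
      have e2 : ∀ η : H, Real.sqrt (q η) ^ 2 = q η := fun η => Real.sq_sqrt (hq η)
      have e3 : ∀ η : H, (Real.sqrt (q η) * Real.sqrt (x η)) ^ 2 = q η * x η := fun η => by
        rw [mul_pow, Real.sq_sqrt (hq η), Real.sq_sqrt (hx0 η)]
      simp only [e1, e2, e3, hqsum, one_mul] at this
      exact this
    -- sum evaluation
    have hsumx : ∑ η, q η * x η = c * w + s * quad (MH - P) u := by
      have hMHP : (∑ η, (q η : ℂ) • (Prj η - P)) = MH - P := by
        have h1 : (∑ η, (q η : ℂ) • (Prj η - P))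
            = (∑ η, (q η : ℂ) • Prj η) - (∑ η : H, (q η : ℂ) • P) := by
          rw [← Finset.sum_sub_distrib]
          exact Finset.sum_congr rfl fun η _ => smul_sub _ _ _
        rw [h1, hsumP, hMH]
      have hqq : ∑ η, q η * quad (Prj η - P) u = quad (MH - P) u := by
        rw [← hMHP, quad_sum]
        exact Finset.sum_congr rfl fun η _ => (quad_smul _ _ _).symm
      have expand : ∀ η : H, q η * x η
          = q η * (c * w) + s * (q η * quad (Prj η - P) u) := fun η => by
        show q η * (c * w + s * quad (Prj η - P) u) = _
        ring
      rw [Finset.sum_congr rfl fun η _ => expand η, Finset.sum_add_distrib,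
        ← Finset.sum_mul, hqsum, one_mul, ← Finset.mul_sum, hqq]
    -- projection bound
    have hproj : quad (MH - P) u ≤ (1 - Δ) * w := by
      have hMHPm : MH * P = P := by
        have h1 : MH * P = ∑ η : H, (q η : ℂ) • (Prj η * P) := by
          rw [hMH, Finset.sum_mul]
          exact Finset.sum_congr rfl fun η _ => smul_mul_assoc _ _ _
        rw [h1]
        simp only [hPrjP]
        exact hsumP
      have hPMH : P * MH = P := by
        have h1 : P * MH = ∑ η : H, (q η : ℂ) • (P * Prj η) := by
          rw [hMH, Finset.mul_sum]
          exact Finset.sum_congr rfl fun η _ => mul_smul_comm _ _ _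
        rw [h1]
        simp only [hPPrj]
        exact hsumP
      set R : Matrix (Fin n) (Fin n) ℂ := 1 - P with hR
      have hRH : Rᴴ = R := by rw [hR, conjTranspose_sub, conjTranspose_one, hP_herm]
      have hconj : Rᴴ * (MH - P) * R = MH - P := by
        rw [hRH, hR, sub_mul, one_mul, mul_sub, mul_one, mul_sub, sub_mul, sub_mul,
          hMHPm, hP_idem, hPMH]
        simp
      have hwR : ‖φ R u‖ ^ 2 = w := by
        have h1 : Rᴴ * R = R := by
          rw [hRH, hR, sub_mul, one_mul, mul_sub, mul_one, hP_idem]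
          simp
        rw [norm_sq_eq_quad, h1, hR, quad_sub, quad_one, hw, hp]
      calc quad (MH - P) u = quad (MH - P) (φ R u) := by
            have h := quad_conj R (MH - P) u
            rw [hconj] at h
            exact h
        _ ≤ opNorm (MH - P) * ‖φ R u‖ ^ 2 := quad_le_opNorm _ _
        _ = (1 - Δ) * w := by rw [hwR, hΔ]; ring
    have hwu : w ≤ ‖u‖ ^ 2 := by rw [hw]; linarith
    have hfinal : ∑ η, q η * x η ≤ (1 - s * Δ) * ‖u‖ ^ 2 := by
      have h1 : c * w + s * quad (MH - P) u ≤ c * w + s * ((1 - Δ) * w) := by nlinarith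
      have h2 : c * w + s * ((1 - Δ) * w) = (1 - s * Δ) * w := by nlinarith [hcs]
      rw [hsumx]
      calc c * w + s * quad (MH - P) u ≤ (1 - s * Δ) * w := by linarith
        _ ≤ (1 - s * Δ) * ‖u‖ ^ 2 := by nlinarith
    have hsq : ∑ η, q η * Real.sqrt (x η) ≤ Real.sqrt (1 - s * Δ) * ‖u‖ := by
      have h0 : 0 ≤ ∑ η, q η * Real.sqrt (x η) :=
        Finset.sum_nonneg fun η _ => mul_nonneg (hq η) (Real.sqrt_nonneg _)
      have := Real.sqrt_le_sqrt (le_trans hCS hfinal)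
      rw [Real.sqrt_sq h0] at this
      calc ∑ η, q η * Real.sqrt (x η) ≤ Real.sqrt ((1 - s * Δ) * ‖u‖ ^ 2) := this
        _ = Real.sqrt (1 - s * Δ) * ‖u‖ := by
            rw [Real.sqrt_mul h1sΔ, Real.sqrt_sq (norm_nonneg u)]
    exact le_trans htri hsq
  -- convert to opNorm
  rw [← opNorm_conjTranspose]
  exact ContinuousLinearMap.opNorm_le_bound _ (Real.sqrt_nonneg _) key


lemma opNorm_mul_le (A B : Matrix (Fin n) (Fin n) ℂ) :
    opNorm (A * B) ≤ opNorm A * opNorm B := by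
  rw [opNorm, opNorm, opNorm, _root_.map_mul]
  exact ContinuousLinearMap.opNorm_comp_le _ _

lemma P_prod (P : Matrix (Fin n) (Fin n) ℂ) :
    ∀ (l : List (Matrix (Fin n) (Fin n) ℂ)), (∀ A ∈ l, P * A = P) → P * l.prod = P := by
  intro l
  induction l with
  | nil => simp
  | cons A l ih =>
    intro h
    rw [List.prod_cons, ← mul_assoc, h A List.mem_cons_self,
      ih fun B hB => h B (List.mem_cons_of_mem _ hB)]

lemma prod_bound (P : Matrix (Fin n) (Fin n) ℂ) (hP_idem : P * P = P) :
    ∀ (l : List ((Matrix (Fin n) (Fin n) ℂ) × ℝ)), l ≠ [] →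
    (∀ p ∈ l, p.1 * P = P ∧ P * p.1 = P ∧ 0 ≤ p.2 ∧ opNorm (p.1 - P) ≤ p.2) →
    opNorm ((l.map Prod.fst).prod - P) ≤ (l.map Prod.snd).prod := by
  intro l
  induction l with
  | nil => intro h; exact absurd rfl h
  | cons a l ih =>
    intro _ h
    obtain ⟨haP, hPa, hb0, hab⟩ := h a List.mem_cons_self
    match l with
    | [] => simpa using hab
    | b :: l' =>
      set l₂ : List ((Matrix (Fin n) (Fin n) ℂ) × ℝ) := b :: l' with hl₂
      have hrec := ih (by simp [hl₂]) fun p hp => h p (List.mem_cons_of_mem _ hp)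
      have hPQ : P * (l₂.map Prod.fst).prod = P :=
        P_prod P _ (by
          intro A hA
          obtain ⟨p, hp, rfl⟩ := List.mem_map.mp hA
          exact (h p (List.mem_cons_of_mem _ hp)).2.1)
      have hid : ((a :: l₂).map Prod.fst).prod - P
          = (a.1 - P) * ((l₂.map Prod.fst).prod - P) := by
        rw [List.map_cons, List.prod_cons, sub_mul, mul_sub, mul_sub, haP, hPQ, hP_idem]
        abel
      rw [hid, List.map_cons, List.prod_cons]
      calc opNorm ((a.1 - P) * ((l₂.map Prod.fst).prod - P))
          ≤ opNorm (a.1 - P) * opNorm ((l₂.map Prod.fst).prod - P) := opNorm_mul_le _ _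
        _ ≤ a.2 * (l₂.map Prod.snd).prod :=
            mul_le_mul hab hrec (norm_nonneg _) hb0

end DesignAux


open DesignAux in
/-- Theorem S1 / Theorem 1 of the main text.
A single-layer-connected non-Haar random circuit, whose layers `M i = ∑ η, q η • M i η`
all share the same local-Haar counterpart `M_H = ∑ η, q η • Prj η`, with averaged local
spectral gap at least `Δloc`, forms an `ε`-approximate unitary `t`-design at depth
`L ≥ 2 Δloc⁻¹ Δ_H⁻¹ (2 N t log d - log ε)`. -/
theorem single_layer_connected_design_depth
    (n : ℕ) (hn : 1 ≤ n) (H : Type) [Fintype H]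
    (P : Matrix (Fin n) (Fin n) ℂ) (hP_herm : Pᴴ = P) (hP_idem : P * P = P)
    (q : H → ℝ) (hq : ∀ η, 0 ≤ q η) (hqsum : ∑ η, q η = 1)
    (Prj : H → Matrix (Fin n) (Fin n) ℂ)
    (hPrj_herm : ∀ η, (Prj η)ᴴ = Prj η) (hPrj_idem : ∀ η, Prj η * Prj η = Prj η)
    (hPrjP : ∀ η, Prj η * P = P) (hPPrj : ∀ η, P * Prj η = P)
    (L : ℕ)
    (M : Fin L → H → Matrix (Fin n) (Fin n) ℂ)
    (hMP : ∀ i η, M i η * P = P) (hPM : ∀ i η, P * M i η = P)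
    (δ : Fin L → ℝ) (hδ0 : ∀ i, 0 ≤ δ i) (hδ1 : ∀ i, δ i ≤ 1)
    (hgram : ∀ i η,
      ((((1 - δ i) ^ 2 : ℝ) : ℂ) • (1 : Matrix (Fin n) (Fin n) ℂ)
        + ((1 - (1 - δ i) ^ 2 : ℝ) : ℂ) • Prj η
        - M i η * (M i η)ᴴ).PosSemidef)
    (N t d : ℕ) (hN : 1 ≤ N) (ht : 1 ≤ t) (hd : 2 ≤ d)
    (ε : ℝ) (hε0 : 0 < ε) (hε1 : ε ≤ 1)
    (Δloc : ℝ) (hΔloc0 : 0 < Δloc) (hΔloc1 : Δloc ≤ 1)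
    (hav : (∑ i, δ i) ≥ (L : ℝ) * Δloc)
    (hΔH : 0 < 1 - opNorm ((∑ η, (q η : ℂ) • Prj η) - P))
    (hL : (L : ℝ) ≥ 2 * Δloc⁻¹ * (1 - opNorm ((∑ η, (q η : ℂ) • Prj η) - P))⁻¹ *
      (2 * N * t * Real.log d - Real.log ε)) :
    opNorm ((List.ofFn fun i => ∑ η, (q η : ℂ) • M i η).reverse.prod - P) ≤
      ε * ((d : ℝ) ^ (2 * N * t))⁻¹ := by
  classical
  set Δ : ℝ := 1 - opNorm ((∑ η, (q η : ℂ) • Prj η) - P) with hΔdef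
  set R : ℝ := 2 * N * t * Real.log d - Real.log ε with hRdef
  have hd1 : (1 : ℝ) < d := by exact_mod_cast lt_of_lt_of_le one_lt_two (by exact_mod_cast hd)
  have hlogd : 0 < Real.log d := Real.log_pos hd1
  have hNt : (2 : ℝ) ≤ 2 * N * t := by
    have hN' : (1 : ℝ) ≤ N := by exact_mod_cast hN
    have ht' : (1 : ℝ) ≤ t := by exact_mod_cast ht
    nlinarith
  have hlogε : Real.log ε ≤ 0 := Real.log_nonpos (le_of_lt hε0) hε1
  have hR0 : 0 < R := by rw [hRdef]; nlinarith
  have hΔ1 : Δ ≤ 1 := by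
    have := norm_nonneg (Matrix.toEuclideanCLM (𝕜 := ℂ)
      ((∑ η, (q η : ℂ) • Prj η) - P))
    rw [hΔdef]; unfold opNorm; linarith
  have hL0 : 0 < L := by
    by_contra hc
    push_neg at hc
    interval_cases L
    have h1 : (0 : ℝ) < 2 * Δloc⁻¹ * Δ⁻¹ * R := by positivity
    simp only [Nat.cast_zero] at hL
    linarith
  -- per-layer bounds
  have hlayer : ∀ i : Fin L, opNorm ((∑ η, (q η : ℂ) • M i η) - P)
      ≤ Real.exp (-(δ i * Δ) / 2) := by
    intro i
    have hc0 : (0 : ℝ) ≤ (1 - δ i) ^ 2 := sq_nonneg _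
    have hs0 : (0 : ℝ) ≤ 1 - (1 - δ i) ^ 2 := by nlinarith [hδ0 i, hδ1 i]
    have hcs : (1 - δ i) ^ 2 + (1 - (1 - δ i) ^ 2) = 1 := by ring
    have hbd := layer_bound P hP_herm hP_idem q hq hqsum Prj hPrjP hPPrj
      (M i) (hMP i) ((1 - δ i) ^ 2) (1 - (1 - δ i) ^ 2) hc0 hs0 hcs (hgram i) hΔH
    set s : ℝ := 1 - (1 - δ i) ^ 2 with hs
    have hsΔ01 : 0 ≤ s * Δ ∧ s * Δ ≤ 1 := by
      constructor
      · exact mul_nonneg hs0 (le_of_lt hΔH)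
      · nlinarith [hδ0 i, hδ1 i, hΔH, hΔ1]
    have hsqrt : Real.sqrt (1 - s * Δ) ≤ 1 - s * Δ / 2 := by
      have h1 : (1 - s * Δ) ≤ (1 - s * Δ / 2) ^ 2 := by
        have he : (1 - s * Δ / 2) ^ 2 = 1 - s * Δ + (s * Δ / 2) ^ 2 := by ring
        rw [he]
        linarith [sq_nonneg (s * Δ / 2)]
      have h2 : 0 ≤ 1 - s * Δ / 2 := by nlinarith [hsΔ01.2]
      calc Real.sqrt (1 - s * Δ) ≤ Real.sqrt ((1 - s * Δ / 2) ^ 2) := Real.sqrt_le_sqrt h1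
        _ = 1 - s * Δ / 2 := Real.sqrt_sq h2
    have hexp1 : 1 - s * Δ / 2 ≤ Real.exp (-(s * Δ) / 2) := by
      have := Real.add_one_le_exp (-(s * Δ) / 2)
      linarith
    have hexp2 : Real.exp (-(s * Δ) / 2) ≤ Real.exp (-(δ i * Δ) / 2) := by
      apply Real.exp_le_exp.mpr
      have hsδ : δ i ≤ s := by rw [hs]; nlinarith [hδ0 i, hδ1 i]
      nlinarith [hΔH]
    exact le_trans hbd (le_trans hsqrt (le_trans hexp1 hexp2))
  -- assemble the product
  set l : List ((Matrix (Fin n) (Fin n) ℂ) × ℝ) :=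
    (List.ofFn fun i => (∑ η, (q η : ℂ) • M i η, Real.exp (-(δ i * Δ) / 2))).reverse with hl
  have hqc : (∑ η, (q η : ℂ)) = 1 := by
    rw [← Complex.ofReal_sum, hqsum, Complex.ofReal_one]
  have hsumP : (∑ η : H, (q η : ℂ) • P) = P := by
    rw [← Finset.sum_smul, hqc, one_smul]
  have hcond : ∀ p ∈ l, p.1 * P = P ∧ P * p.1 = P ∧ 0 ≤ p.2 ∧ opNorm (p.1 - P) ≤ p.2 := by
    intro p hp
    rw [hl, List.mem_reverse, List.mem_ofFn] at hp
    obtain ⟨i, rfl⟩ := hp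
    refine ⟨?_, ?_, le_of_lt (Real.exp_pos _), hlayer i⟩
    · have h1 : (∑ η, (q η : ℂ) • M i η) * P = ∑ η : H, (q η : ℂ) • (M i η * P) := by
        rw [Finset.sum_mul]
        exact Finset.sum_congr rfl fun η _ => smul_mul_assoc _ _ _
      rw [h1]
      simp only [hMP i]
      exact hsumP
    · have h1 : P * (∑ η, (q η : ℂ) • M i η) = ∑ η : H, (q η : ℂ) • (P * M i η) := by
        rw [Finset.mul_sum]
        exact Finset.sum_congr rfl fun η _ => mul_smul_comm _ _ _
      rw [h1]
      simp only [hPM i]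
      exact hsumP
  have hlne : l ≠ [] := by
    apply List.ne_nil_of_length_pos
    simp [hl, hL0]
  have hmapfst : l.map Prod.fst = (List.ofFn fun i => ∑ η, (q η : ℂ) • M i η).reverse := by
    rw [hl, List.map_reverse, List.map_ofFn]
    rfl
  have hmapsnd : (l.map Prod.snd).prod = Real.exp (-(∑ i, δ i) * Δ / 2) := by
    rw [hl, List.map_reverse, List.map_ofFn, List.prod_reverse, List.prod_ofFn]
    simp only [Function.comp]
    rw [← Real.exp_sum]
    congr 1
    calc ∑ i, -(δ i * Δ) / 2 = ∑ i, δ i * (-Δ / 2) :=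
          Finset.sum_congr rfl fun i _ => by ring
      _ = (∑ i, δ i) * (-Δ / 2) := (Finset.sum_mul _ _ _).symm
      _ = -(∑ i, δ i) * Δ / 2 := by ring
  have hmain := prod_bound P hP_idem l hlne hcond
  rw [hmapfst, hmapsnd] at hmain
  -- final numeric bound
  have hΔloc' : Δloc ≠ 0 := ne_of_gt hΔloc0
  have hΔ' : Δ ≠ 0 := ne_of_gt hΔH
  have hmulR : 2 * Δloc⁻¹ * Δ⁻¹ * R * (Δloc * Δ / 2) = R := by
    field_simp
  have hLR : R ≤ (L : ℝ) * Δloc * Δ / 2 := by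
    have hpos : (0 : ℝ) < Δloc * Δ / 2 := by positivity
    have := mul_le_mul_of_nonneg_right hL (le_of_lt hpos)
    rw [hmulR] at this
    calc R ≤ (L : ℝ) * (Δloc * Δ / 2) := this
      _ = (L : ℝ) * Δloc * Δ / 2 := by ring
  have hsum : (L : ℝ) * Δloc * Δ / 2 ≤ (∑ i, δ i) * Δ / 2 := by
    have := hav
    nlinarith [hΔH]
  have hexpfin : Real.exp (-(∑ i, δ i) * Δ / 2) ≤ Real.exp (-R) := by
    apply Real.exp_le_exp.mpr
    have : R ≤ (∑ i, δ i) * Δ / 2 := le_trans hLR hsum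
    linarith
  have hval : Real.exp (-R) = ε * ((d : ℝ) ^ (2 * N * t))⁻¹ := by
    rw [hRdef, neg_sub, Real.exp_sub, Real.exp_log hε0]
    have hdpos : (0 : ℝ) < d := by positivity
    have h1 : (2 : ℝ) * N * t * Real.log d = ((2 * N * t : ℕ) : ℝ) * Real.log d := by
      push_cast; ring
    rw [h1, Real.exp_nat_mul, Real.exp_log hdpos]
    ring
  calc opNorm ((List.ofFn fun i => ∑ η, (q η : ℂ) • M i η).reverse.prod - P)
      ≤ Real.exp (-(∑ i, δ i) * Δ / 2) := hmain
    _ ≤ Real.exp (-R) := hexpfin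
    _ = ε * ((d : ℝ) ^ (2 * N * t))⁻¹ := hval
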